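/- Pseudo-differential operator inversion: In the ring of pseudo-differential operators generated by $\partial_x$, $\partial_x^{-1}$, and multiplication by $e^x$, with relations $\partial_x e^{jx} = e^{jx}(\partial_x + j)$ and $\partial_x^{-1} e^{jx} = e^{jx}(\partial_x + j)^{-1}$, the operator $1 - k e^x (k\partial_x + k - 1)(k\partial_x+k-2)\cdots(k\partial_x+1)\partial_x^{-(N-1)}$ has two-sided inverse $1 + \sum_{d=1}^{\infty} e^{dx} \prod_{m=0}^{kd-1}(k\partial_x + m) \prod_{j=0}^{d-1}(\partial_x + j)^{-N}$. -/

import Mathlib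

open Polynomial Finset


/-- In the algebra of formal series `∑_d e^{dx} R_d(∂ₓ)` with `R_d` rational functions of
`∂ₓ`, conjugation by `e^{jx}` shifts the argument: `R(∂ₓ) e^{jx} = e^{jx} R(∂ₓ + j)`. -/
noncomputable def shiftOp (j : ℕ) (R : RatFunc ℚ) : RatFunc ℚ :=
  RatFunc.eval (algebraMap ℚ (RatFunc ℚ)) (RatFunc.X + (j : RatFunc ℚ)) R

/-- Multiplication of pseudo-differential operators `∑ e^{ax} F_a(∂)` and `∑ e^{bx} G_b(∂)`:
the coefficient of `e^{dx}` is `∑_{a+b=d} F_a(∂+b) G_b(∂)`. -/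
noncomputable def pdoMul (F G : ℕ → RatFunc ℚ) : ℕ → RatFunc ℚ :=
  fun d => ∑ p ∈ Finset.HasAntidiagonal.antidiagonal d, shiftOp p.2 (F p.1) * G p.2

/-- The operator `1 - k eˣ (k∂ₓ+k-1)⋯(k∂ₓ+1) ∂ₓ^{-(N-1)}`. -/
noncomputable def Pop (N k : ℕ) : ℕ → RatFunc ℚ := fun d =>
  if d = 0 then 1
  else if d = 1 then
    -((k : RatFunc ℚ) *
        (∏ m ∈ Finset.Icc 1 (k - 1), ((k : RatFunc ℚ) * RatFunc.X + (m : RatFunc ℚ))) /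
      RatFunc.X ^ (N - 1))
  else 0

/-- The operator `1 + ∑_{d≥1} e^{dx} ∏_{m=0}^{kd-1}(k∂ₓ+m) ∏_{j=0}^{d-1}(∂ₓ+j)^{-N}`. -/
noncomputable def Qop (N k : ℕ) : ℕ → RatFunc ℚ := fun d =>
  (∏ m ∈ Finset.range (k * d), ((k : RatFunc ℚ) * RatFunc.X + (m : RatFunc ℚ))) /
    ∏ j ∈ Finset.range d, (RatFunc.X + (j : RatFunc ℚ)) ^ N

section Helpers

lemma ev_eq (j : ℕ) (s : ℚ[X]) :
    Polynomial.eval₂ (algebraMap ℚ (RatFunc ℚ)) (RatFunc.X + (j : RatFunc ℚ)) s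
      = algebraMap ℚ[X] (RatFunc ℚ) (s.comp (X + C (j : ℚ))) := by
  have h : (Polynomial.eval₂RingHom (algebraMap ℚ (RatFunc ℚ)) (RatFunc.X + (j : RatFunc ℚ)))
      = (algebraMap ℚ[X] (RatFunc ℚ)).comp (Polynomial.eval₂RingHom C (X + C (j : ℚ))) := by
    apply Polynomial.ringHom_ext
    · intro a
      simp [RatFunc.algebraMap_C]
    · simp [RatFunc.algebraMap_X, RatFunc.algebraMap_C, map_natCast]
  have h2 := congrFun (congrArg (fun f : ℚ[X] →+* RatFunc ℚ => (f : ℚ[X] → RatFunc ℚ)) h) s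
  simpa [Polynomial.comp] using h2

lemma comp_ne_zero {s : ℚ[X]} (hs : s ≠ 0) (j : ℕ) : s.comp (X + C (j : ℚ)) ≠ 0 := by
  intro hzero
  rcases Polynomial.comp_eq_zero_iff.mp hzero with h | ⟨_, h⟩
  · exact hs h
  · have := congrArg (fun p : ℚ[X] => p.coeff 1) h
    simp at this

lemma eval₂_ne (j : ℕ) {s : ℚ[X]} (hs : s ≠ 0) :
    Polynomial.eval₂ (algebraMap ℚ (RatFunc ℚ)) (RatFunc.X + (j : RatFunc ℚ)) s ≠ 0 := by
  rw [ev_eq]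
  exact RatFunc.algebraMap_ne_zero (comp_ne_zero hs j)

lemma shiftOp_div (j : ℕ) (p q : ℚ[X]) (hq : q ≠ 0) :
    shiftOp j (algebraMap ℚ[X] (RatFunc ℚ) p / algebraMap ℚ[X] (RatFunc ℚ) q)
      = algebraMap ℚ[X] (RatFunc ℚ) (p.comp (X + C (j : ℚ)))
        / algebraMap ℚ[X] (RatFunc ℚ) (q.comp (X + C (j : ℚ))) := by
  set R := algebraMap ℚ[X] (RatFunc ℚ) p / algebraMap ℚ[X] (RatFunc ℚ) q with hR
  have hq' : algebraMap ℚ[X] (RatFunc ℚ) q ≠ 0 := RatFunc.algebraMap_ne_zero hq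
  have hmul : R * algebraMap ℚ[X] (RatFunc ℚ) q = algebraMap ℚ[X] (RatFunc ℚ) p :=
    div_mul_cancel₀ _ hq'
  have h1 : Polynomial.eval₂ (algebraMap ℚ (RatFunc ℚ)) (RatFunc.X + (j : RatFunc ℚ)) R.denom ≠ 0 :=
    eval₂_ne j (RatFunc.denom_ne_zero R)
  have h2 : Polynomial.eval₂ (algebraMap ℚ (RatFunc ℚ)) (RatFunc.X + (j : RatFunc ℚ))
      (RatFunc.denom (algebraMap ℚ[X] (RatFunc ℚ) q)) ≠ 0 :=
    eval₂_ne j (RatFunc.denom_ne_zero _)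
  have key := RatFunc.eval_mul (f := algebraMap ℚ (RatFunc ℚ))
    (a := RatFunc.X + (j : RatFunc ℚ)) h1 h2
  rw [hmul] at key
  rw [RatFunc.eval_algebraMap, RatFunc.eval_algebraMap] at key
  simp only [Algebra.algebraMap_self, RingHom.id_apply, map_id] at key
  rw [ev_eq, ev_eq] at key
  have hqc : algebraMap ℚ[X] (RatFunc ℚ) (q.comp (X + C (j : ℚ))) ≠ 0 :=
    RatFunc.algebraMap_ne_zero (comp_ne_zero hq j)
  rw [eq_div_iff hqc]
  exact key.symm

lemma shiftOp_one (j : ℕ) : shiftOp j 1 = 1 := by simp [shiftOp]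

lemma shiftOp_zero' (j : ℕ) : shiftOp j 0 = 0 := by simp [shiftOp]

noncomputable def Ap (k d : ℕ) : ℚ[X] :=
  ∏ m ∈ range (k * d), ((k : ℚ[X]) * X + (m : ℚ[X]))

noncomputable def Bp (N d : ℕ) : ℚ[X] :=
  ∏ j ∈ range d, (X + (j : ℚ[X])) ^ N

noncomputable def Pp (N k : ℕ) : ℚ[X] :=
  -((k : ℚ[X]) * ∏ m ∈ Icc 1 (k - 1), ((k : ℚ[X]) * X + (m : ℚ[X])))

lemma lin_ne {k : ℕ} (hk : 1 ≤ k) (m : ℕ) : ((k : ℚ[X]) * X + (m : ℚ[X])) ≠ 0 := by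
  intro h
  have := congrArg (fun p : ℚ[X] => p.coeff 1) h
  simp [Polynomial.coeff_natCast_ite] at this
  omega

lemma Xadd_ne (j : ℕ) : (X + (j : ℚ[X])) ≠ 0 := by
  intro h
  have := congrArg (fun p : ℚ[X] => p.coeff 1) h
  simp [Polynomial.coeff_natCast_ite] at this

lemma Ap_ne {k : ℕ} (hk : 1 ≤ k) (d : ℕ) : Ap k d ≠ 0 :=
  Finset.prod_ne_zero_iff.mpr fun m _ => lin_ne hk m

lemma Bp_ne (N d : ℕ) : Bp N d ≠ 0 :=
  Finset.prod_ne_zero_iff.mpr fun j _ => pow_ne_zero _ (Xadd_ne j)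

lemma hQ (N k d : ℕ) :
    Qop N k d = algebraMap ℚ[X] (RatFunc ℚ) (Ap k d) / algebraMap ℚ[X] (RatFunc ℚ) (Bp N d) := by
  simp [Qop, Ap, Bp, map_prod, map_pow, map_mul, map_add, map_natCast, RatFunc.algebraMap_X]

lemma hP (N k : ℕ) :
    Pop N k 1 = algebraMap ℚ[X] (RatFunc ℚ) (Pp N k) / algebraMap ℚ[X] (RatFunc ℚ) (X ^ (N - 1)) := by
  simp [Pop, Pp, map_prod, map_pow, map_mul, map_add, map_neg, map_natCast,
    RatFunc.algebraMap_X, neg_div]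

lemma comp_prod {α : Type*} (s : Finset α) (f : α → ℚ[X]) (t : ℚ[X]) :
    (∏ i ∈ s, f i).comp t = ∏ i ∈ s, (f i).comp t := by
  simp only [Polynomial.comp]
  exact Polynomial.eval₂_finset_prod _ _ _ _

lemma comp_lin (k m j : ℕ) :
    ((k : ℚ[X]) * X + (m : ℚ[X])).comp (X + C (j : ℚ))
      = (k : ℚ[X]) * X + ((k * j + m : ℕ) : ℚ[X]) := by
  simp only [add_comp, mul_comp, X_comp, natCast_comp]
  push_cast [Polynomial.C_eq_natCast]
  ring

lemma comp_XaddPow (N i j : ℕ) :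
    ((X + (i : ℚ[X])) ^ N).comp (X + C (j : ℚ)) = (X + ((j + i : ℕ) : ℚ[X])) ^ N := by
  simp only [pow_comp, add_comp, X_comp, natCast_comp]
  push_cast [Polynomial.C_eq_natCast]
  ring

end Helpers

lemma Xadd_ne' (j : ℕ) : (X + C (j : ℚ)) ≠ 0 := by
  intro h
  have := congrArg (fun p : ℚ[X] => p.coeff 1) h
  simp at this

lemma PQ_succ (N k : ℕ) (hN : 1 ≤ N) (hk : 1 ≤ k) (c : ℕ) :
    pdoMul (Pop N k) (Qop N k) (c + 1) = 0 := by
  rw [pdoMul, Finset.Nat.sum_antidiagonal_eq_sum_range_succ_mk]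
  rw [Finset.sum_range_succ', Finset.sum_range_succ']
  have hzero : (∑ i ∈ range c,
      shiftOp (c + 1 - (i + 1 + 1)) (Pop N k (i + 1 + 1)) * Qop N k (c + 1 - (i + 1 + 1))) = 0 := by
    apply Finset.sum_eq_zero
    intro i _
    have h2 : Pop N k (i + 1 + 1) = 0 := by simp [Pop]
    rw [h2, shiftOp_zero', zero_mul]
  rw [hzero, zero_add]
  have e1 : c + 1 - (0 + 1) = c := by omega
  have e0 : c + 1 - 0 = c + 1 := by omega
  rw [e1, e0]
  have hp0 : Pop N k 0 = 1 := by simp [Pop]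
  rw [hp0, shiftOp_one, one_mul, hP, hQ, hQ,
    shiftOp_div _ _ _ (pow_ne_zero _ Polynomial.X_ne_zero)]
  have hPc : (Pp N k).comp (X + C (c : ℚ))
      = -((k : ℚ[X]) * ∏ m ∈ Icc 1 (k - 1), ((k : ℚ[X]) * X + ((k * c + m : ℕ) : ℚ[X]))) := by
    simp only [Pp, neg_comp, mul_comp, natCast_comp, comp_prod, comp_lin]
  have hXc : ((X : ℚ[X]) ^ (N - 1)).comp (X + C (c : ℚ)) = (X + C (c : ℚ)) ^ (N - 1) := by
    simp [pow_comp]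
  rw [hPc, hXc, div_mul_div_comm, div_add_div _ _
      (mul_ne_zero (RatFunc.algebraMap_ne_zero (pow_ne_zero _ (Xadd_ne' c)))
        (RatFunc.algebraMap_ne_zero (Bp_ne N c)))
      (RatFunc.algebraMap_ne_zero (Bp_ne N (c + 1))), _root_.div_eq_zero_iff]
  left
  simp only [← map_mul, ← map_add]
  rw [← map_zero (algebraMap ℚ[X] (RatFunc ℚ))]
  refine congrArg _ ?_
  obtain ⟨n, rfl⟩ := Nat.exists_eq_add_of_le hN
  have hN1 : 1 + n - 1 = n := by omega
  have hA : Ap k (c + 1) = Ap k c * (((k : ℚ[X]) * (X + C (c : ℚ)))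
      * ∏ m ∈ Icc 1 (k - 1), ((k : ℚ[X]) * X + ((k * c + m : ℕ) : ℚ[X]))) := by
    unfold Ap
    rw [show k * (c + 1) = k * c + k by ring, Finset.prod_range_add]
    congr 1
    rw [Finset.range_eq_Ico, Finset.prod_eq_prod_Ico_succ_bot (by omega : 0 < k)]
    have hIco : Ico (0 + 1) k = Icc 1 (k - 1) := by
      ext x
      simp only [mem_Ico, mem_Icc]
      omega
    rw [hIco]
    congr 1
    push_cast [Polynomial.C_eq_natCast]
    ring
  have hB : Bp (1 + n) (c + 1) = Bp (1 + n) c * (X + C (c : ℚ)) ^ (1 + n) := by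
    unfold Bp
    rw [Finset.prod_range_succ, Polynomial.C_eq_natCast]
  rw [hN1, hA, hB]
  ring

lemma QP_succ (N k : ℕ) (hN : 1 ≤ N) (hk : 1 ≤ k) (c : ℕ) :
    pdoMul (Qop N k) (Pop N k) (c + 1) = 0 := by
  rw [pdoMul, Finset.Nat.sum_antidiagonal_eq_sum_range_succ_mk]
  rw [Finset.sum_range_succ, Finset.sum_range_succ]
  have hzero : (∑ i ∈ range c, shiftOp (c + 1 - i) (Qop N k i) * Pop N k (c + 1 - i)) = 0 := by
    apply Finset.sum_eq_zero
    intro i hi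
    have hi' : i < c := Finset.mem_range.mp hi
    have h2 : Pop N k (c + 1 - i) = 0 := by
      have h3 : ¬(c + 1 - i = 0) := by omega
      have h4 : ¬(c + 1 - i = 1) := by omega
      simp [Pop, h3, h4]
    rw [h2, mul_zero]
  rw [hzero, zero_add]
  have e1 : c + 1 - c = 1 := by omega
  rw [e1, Nat.sub_self]
  have hp0 : Pop N k 0 = 1 := by simp [Pop]
  rw [hp0, mul_one, hP, hQ, hQ, shiftOp_div _ _ _ (Bp_ne N c),
    shiftOp_div _ _ _ (Bp_ne N (c + 1))]
  simp only [Nat.cast_zero, map_zero, add_zero, Polynomial.comp_X]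
  have hAc : (Ap k c).comp (X + C ((1 : ℕ) : ℚ))
      = ∏ m ∈ range (k * c), ((k : ℚ[X]) * X + ((k + m : ℕ) : ℚ[X])) := by
    simp only [Ap, comp_prod, comp_lin, one_mul, mul_one]
  have hBc : (Bp N c).comp (X + C ((1 : ℕ) : ℚ))
      = ∏ j ∈ range c, (X + ((1 + j : ℕ) : ℚ[X])) ^ N := by
    simp only [Bp, comp_prod, comp_XaddPow]
  rw [hAc, hBc, div_mul_div_comm, div_add_div _ _
      (mul_ne_zero (RatFunc.algebraMap_ne_zero (Finset.prod_ne_zero_iff.mpr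
          fun j _ => pow_ne_zero _ (Xadd_ne (1 + j))))
        (RatFunc.algebraMap_ne_zero (pow_ne_zero _ Polynomial.X_ne_zero)))
      (RatFunc.algebraMap_ne_zero (Bp_ne N (c + 1))), _root_.div_eq_zero_iff]
  left
  simp only [← map_mul, ← map_add]
  rw [← map_zero (algebraMap ℚ[X] (RatFunc ℚ))]
  refine congrArg _ ?_
  obtain ⟨n, rfl⟩ := Nat.exists_eq_add_of_le hN
  have hN1 : 1 + n - 1 = n := by omega
  have hA : Ap k (c + 1) = ((k : ℚ[X]) * X
        * ∏ m ∈ Icc 1 (k - 1), ((k : ℚ[X]) * X + (m : ℚ[X])))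
      * ∏ m ∈ range (k * c), ((k : ℚ[X]) * X + ((k + m : ℕ) : ℚ[X])) := by
    unfold Ap
    rw [show k * (c + 1) = k + k * c by ring, Finset.prod_range_add]
    congr 1
    rw [Finset.range_eq_Ico, Finset.prod_eq_prod_Ico_succ_bot (by omega : 0 < k)]
    have hIco : Ico (0 + 1) k = Icc 1 (k - 1) := by
      ext x
      simp only [mem_Ico, mem_Icc]
      omega
    rw [hIco]
    congr 1
    push_cast
    ring
  have hB : Bp (1 + n) (c + 1)
      = (X : ℚ[X]) ^ (1 + n) * ∏ j ∈ range c, (X + ((1 + j : ℕ) : ℚ[X])) ^ (1 + n) := by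
    unfold Bp
    rw [show c + 1 = 1 + c by ring, Finset.prod_range_add, Finset.prod_range_one]
    push_cast
    ring
  rw [hN1, hA, hB, Pp]
  ring

lemma pdo_zero_P (N k : ℕ) : pdoMul (Pop N k) (Qop N k) 0 = 1 := by
  rw [pdoMul, Finset.Nat.antidiagonal_zero]
  simp [Pop, Qop, shiftOp_one]

lemma pdo_zero_Q (N k : ℕ) : pdoMul (Qop N k) (Pop N k) 0 = 1 := by
  rw [pdoMul, Finset.Nat.antidiagonal_zero]
  simp [Pop, Qop, shiftOp]


/-- Pseudo-differential operator inversion: the operator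
`1 - k eˣ (k∂ₓ+k-1)⋯(k∂ₓ+1) ∂ₓ^{-(N-1)}` has two-sided inverse
`1 + ∑_{d≥1} e^{dx} ∏_{m=0}^{kd-1}(k∂ₓ+m) ∏_{j=0}^{d-1}(∂ₓ+j)^{-N}`. -/
theorem stmt_13 (N k : ℕ) (hN : 1 ≤ N) (hk : 1 ≤ k) :
    (∀ d : ℕ, pdoMul (Pop N k) (Qop N k) d = if d = 0 then 1 else 0) ∧
    (∀ d : ℕ, pdoMul (Qop N k) (Pop N k) d = if d = 0 then 1 else 0) := by
  constructor
  · intro d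
    cases d with
    | zero => simpa using pdo_zero_P N k
    | succ c => simpa using PQ_succ N k hN hk c
  · intro d
    cases d with
    | zero => simpa using pdo_zero_Q N k
    | succ c => simpa using QP_succ N k hN hk c
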